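/- For all weight modules V, W, U over Ū, the hexagon identities hold: c_{V,W⊗U} = (id_W ⊗ c_{V,U}) ∘ (c_{V,W} ⊗ id_U) and c_{V⊗W,U} = (c_{V,U} ⊗ id_W) ∘ (id_V ⊗ c_{W,U}), where all tensor products of weight modules carry the Ū-module structure induced by the coproduct Δ. -/

import Mathlib

noncomputable section

open scoped TensorProduct

namespace Unrolled

/-- `q^z = exp(π √-1 z / r)`. -/
def qc (r : ℕ) (z : ℂ) : ℂ := Complex.exp (Real.pi * Complex.I * z / r)

/-- `{z} = q^z - q^{-z}`. -/
def qbrk (r : ℕ) (z : ℂ) : ℂ := qc r z - qc r (-z)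

/-- `[z] = {z}/{1}`. -/
def qint (r : ℕ) (z : ℂ) : ℂ := qbrk r z / qbrk r 1

/-- `{n}! = ∏_{i=1}^n {i}`. -/
def qbrkFact (r n : ℕ) : ℂ := ∏ i ∈ Finset.range n, qbrk r ((i : ℂ) + 1)

/-- `[n]! = ∏_{i=1}^n [i]`. -/
def qintFact (r n : ℕ) : ℂ := ∏ i ∈ Finset.range n, qint r ((i : ℂ) + 1)

/-- The data of five operators `K, K⁻¹, H, E, F` on a complex vector space. -/
structure Ops (V : Type) [AddCommGroup V] [Module ℂ V] where
  K : Module.End ℂ V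
  Kinv : Module.End ℂ V
  H : Module.End ℂ V
  E : Module.End ℂ V
  F : Module.End ℂ V

/-- A module over the restricted unrolled quantum group `Ū = Ū_q^H(sl₂(ℂ))`:
five operators satisfying the defining relations of `Ū`. -/
structure Rep (r : ℕ) (V : Type) [AddCommGroup V] [Module ℂ V] extends Ops V where
  rel_KKinv : K * Kinv = 1
  rel_KinvK : Kinv * K = 1
  rel_HK : H * K = K * H
  rel_HE : H * E - E * H = (2 : ℂ) • E
  rel_HF : H * F - F * H = (-2 : ℂ) • F
  rel_KE : K * E = qc r 2 • (E * K)
  rel_KF : K * F = qc r (-2) • (F * K)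
  rel_EF : E * F - F * E = (qbrk r 1)⁻¹ • (K - Kinv)
  rel_Er : E ^ r = 0
  rel_Fr : F ^ r = 0

variable {V W U : Type} [AddCommGroup V] [Module ℂ V] [AddCommGroup W] [Module ℂ W]
  [AddCommGroup U] [Module ℂ U]

/-- A `Ū`-submodule: a subspace invariant under the five operators. -/
def Ops.Invariant (A : Ops V) (p : Submodule ℂ V) : Prop :=
  (∀ v ∈ p, A.K v ∈ p) ∧ (∀ v ∈ p, A.Kinv v ∈ p) ∧ (∀ v ∈ p, A.H v ∈ p) ∧
    (∀ v ∈ p, A.E v ∈ p) ∧ (∀ v ∈ p, A.F v ∈ p)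

/-- A simple `Ū`-module: nonzero, with no nonzero proper invariant subspace. -/
def Ops.IsSimple (A : Ops V) : Prop :=
  (∃ v : V, v ≠ 0) ∧ ∀ p : Submodule ℂ V, A.Invariant p → p = ⊥ ∨ p = ⊤

/-- A weight module: finite dimensional, a direct sum of `H`-eigenspaces, on which `K`
acts by `q^μ` on the `H`-eigenspace of eigenvalue `μ`. -/
structure IsWeight (r : ℕ) {V : Type} [AddCommGroup V] [Module ℂ V] (A : Ops V) : Prop where
  finDim : FiniteDimensional ℂ V
  sup_eigenspaces : (⨆ μ : ℂ, Module.End.eigenspace A.H μ) = ⊤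
  K_apply : ∀ (μ : ℂ), ∀ v ∈ Module.End.eigenspace A.H μ, A.K v = qc r μ • v

/-- A `Ū`-linear map. -/
def IsEquivariant (A : Ops V) (B : Ops W) (f : V →ₗ[ℂ] W) : Prop :=
  (∀ v, f (A.K v) = B.K (f v)) ∧ (∀ v, f (A.Kinv v) = B.Kinv (f v)) ∧
    (∀ v, f (A.H v) = B.H (f v)) ∧ (∀ v, f (A.E v) = B.E (f v)) ∧
    (∀ v, f (A.F v) = B.F (f v))

/-- Isomorphism of `Ū`-modules. -/
def OpsIso (A : Ops V) (B : Ops W) : Prop :=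
  ∃ e : V ≃ₗ[ℂ] W, IsEquivariant A B (e : V →ₗ[ℂ] W)

/-- The weight `α + r - 1 - 2i` of the basis vector `v_i` of the Verma module `V_α`. -/
def wt (r : ℕ) (α : ℂ) (i : ℕ) : ℂ := α + r - 1 - 2 * i

/-- The coefficient `{i}{i-α}/{1}²` occurring in `E v_i`. -/
def cE (r : ℕ) (α : ℂ) (i : ℕ) : ℂ := qbrk r i * qbrk r ((i : ℂ) - α) / qbrk r 1 ^ 2

/-- The Verma module `V_α` of highest weight `α + r - 1`, realized on `Fin r → ℂ`
with basis `v_0, …, v_{r-1}`. -/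
def vermaOps (r : ℕ) (α : ℂ) : Ops (Fin r → ℂ) where
  K := (Matrix.diagonal fun i : Fin r => qc r (wt r α (i : ℕ))).mulVecLin
  Kinv := (Matrix.diagonal fun i : Fin r => qc r (-wt r α (i : ℕ))).mulVecLin
  H := (Matrix.diagonal fun i : Fin r => wt r α (i : ℕ)).mulVecLin
  E := (Matrix.of fun i j : Fin r =>
    if (j : ℕ) = (i : ℕ) + 1 then cE r α (j : ℕ) else 0).mulVecLin
  F := (Matrix.of fun i j : Fin r =>
    if (i : ℕ) = (j : ℕ) + 1 then (1 : ℂ) else 0).mulVecLin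

/-- `α_{l,n} = (l-1)r + n + 1`, so that `S_n^{lr}` is a quotient of `V_{α_{l,n}}`. -/
def aln (r : ℕ) (l : ℤ) (n : ℕ) : ℂ := ((l : ℂ) - 1) * r + n + 1

/-- The simple module `S_n^{lr}` of highest weight `lr + n` and dimension `n+1`,
realized on `Fin (n+1) → ℂ`. -/
def smodOps (r : ℕ) (l : ℤ) (n : ℕ) : Ops (Fin (n + 1) → ℂ) where
  K := (Matrix.diagonal fun i : Fin (n + 1) => qc r (wt r (aln r l n) (i : ℕ))).mulVecLin
  Kinv := (Matrix.diagonal fun i : Fin (n + 1) => qc r (-wt r (aln r l n) (i : ℕ))).mulVecLin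
  H := (Matrix.diagonal fun i : Fin (n + 1) => wt r (aln r l n) (i : ℕ)).mulVecLin
  E := (Matrix.of fun i j : Fin (n + 1) =>
    if (j : ℕ) = (i : ℕ) + 1 then cE r (aln r l n) (j : ℕ) else 0).mulVecLin
  F := (Matrix.of fun i j : Fin (n + 1) =>
    if (i : ℕ) = (j : ℕ) + 1 then (1 : ℂ) else 0).mulVecLin

/-- `α ∈ (ℂ∖ℤ) ∪ rℤ`. -/
def goodα (r : ℕ) (α : ℂ) : Prop := (¬∃ n : ℤ, α = (n : ℂ)) ∨ ∃ m : ℤ, α = (r : ℂ) * m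

/-- The tensor product `Ū`-module structure induced by the coproduct `Δ`. -/
def tensorOps (A : Ops V) (B : Ops W) : Ops (V ⊗[ℂ] W) where
  K := TensorProduct.map A.K B.K
  Kinv := TensorProduct.map A.Kinv B.Kinv
  H := TensorProduct.map A.H (LinearMap.id : W →ₗ[ℂ] W) +
    TensorProduct.map (LinearMap.id : V →ₗ[ℂ] V) B.H
  E := TensorProduct.map (LinearMap.id : V →ₗ[ℂ] V) B.E + TensorProduct.map A.E B.K
  F := TensorProduct.map A.F (LinearMap.id : W →ₗ[ℂ] W) + TensorProduct.map A.Kinv B.F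

/-- The operator `Σ_{l=0}^{r-1} ({1}^{2l}/{l}!) q^{l(l-1)/2} E^l ⊗ F^l` on `V ⊗ W`. -/
def braidSum (r : ℕ) (A : Ops V) (B : Ops W) : Module.End ℂ (V ⊗[ℂ] W) :=
  ∑ l ∈ Finset.range r,
    (qbrk r 1 ^ (2 * l) / qbrkFact r l * qc r ((l : ℂ) * ((l : ℂ) - 1) / 2)) •
      TensorProduct.map (A.E ^ l) (B.F ^ l)

/-- The defining property of the operator `q^{H⊗H/2}` on `V ⊗ W`: it multiplies
`v ⊗ w` by `q^{λμ/2}` for weight vectors `v, w` of weights `λ, μ`. -/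
def IsqHH (r : ℕ) (A : Ops V) (B : Ops W) (Q : Module.End ℂ (V ⊗[ℂ] W)) : Prop :=
  ∀ (lam mu : ℂ) (v : V) (w : W),
    v ∈ Module.End.eigenspace A.H lam → w ∈ Module.End.eigenspace B.H mu →
      Q (v ⊗ₜ[ℂ] w) = qc r (lam * mu / 2) • (v ⊗ₜ[ℂ] w)

/-- The braiding `c_{V,W} = τ ∘ q^{H⊗H/2} ∘ Σ_l ({1}^{2l}/{l}!) q^{l(l-1)/2} E^l ⊗ F^l`,
where `Q` is the operator `q^{H⊗H/2}`. -/
def braidMap (r : ℕ) (A : Ops V) (B : Ops W) (Q : Module.End ℂ (V ⊗[ℂ] W)) :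
    V ⊗[ℂ] W →ₗ[ℂ] W ⊗[ℂ] V :=
  (TensorProduct.comm ℂ V W).toLinearMap ∘ₗ Q ∘ₗ braidSum r A B


-- ===================== auxiliary scalar lemmas =====================

lemma qc_mul (r : ℕ) (x y : ℂ) : qc r x * qc r y = qc r (x + y) := by
  unfold qc; rw [← Complex.exp_add]; ring_nf

lemma qc_mul_assoc (r : ℕ) (x : ℂ) (a b : ℂ) : x * qc r a * qc r b = x * qc r (a+b) := by
  rw [mul_assoc, qc_mul]

lemma qc_zero (r : ℕ) : qc r 0 = 1 := by simp [qc]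

lemma qc_ne_zero (r : ℕ) (x : ℂ) : qc r x ≠ 0 := Complex.exp_ne_zero _

lemma qbrk_nat_ne_zero {r : ℕ} (hr : r ≠ 0) {a : ℕ} (h1 : 0 < a) (h2 : a < r) :
    qbrk r a ≠ 0 := by
  intro h
  have h' : qc r a = qc r (-(a : ℂ)) := sub_eq_zero.mp h
  have h2' : qc r ((a : ℂ) + a) = 1 := by
    rw [← qc_mul]; nth_rewrite 1 [h']; rw [qc_mul]; simp [qc_zero]
  unfold qc at h2'
  rw [Complex.exp_eq_one_iff] at h2'
  obtain ⟨n, hn⟩ := h2'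
  have hπ : (Real.pi : ℂ) ≠ 0 := by simpa using Real.pi_ne_zero
  have hrc : (r : ℂ) ≠ 0 := by exact_mod_cast hr
  have hI := Complex.I_ne_zero
  have h2πI : (2 : ℂ) * Real.pi * Complex.I ≠ 0 :=
    mul_ne_zero (mul_ne_zero two_ne_zero hπ) hI
  field_simp at hn
  have key : (a : ℂ) * (2 * Real.pi * Complex.I)
      = ((n : ℂ) * r) * (2 * Real.pi * Complex.I) := by linear_combination (Real.pi * Complex.I) * hn
  have key2 : (a : ℂ) = (n : ℂ) * r := mul_right_cancel₀ h2πI key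
  have key' : (a : ℤ) = n * r := by exact_mod_cast key2
  have hr' : 0 < (r : ℤ) := by exact_mod_cast hr.bot_lt
  have ha' : 0 < (a : ℤ) := by exact_mod_cast h1
  have ha2 : (a : ℤ) < r := by exact_mod_cast h2
  rcases le_or_gt n 0 with hn0 | hn0
  · nlinarith
  · have h1n : 1 ≤ n := hn0
    nlinarith

lemma qbrkFact_ne_zero {r : ℕ} (hr : r ≠ 0) {n : ℕ} (h : n < r) : qbrkFact r n ≠ 0 := by
  unfold qbrkFact
  rw [Finset.prod_ne_zero_iff]
  intro i hi
  rw [Finset.mem_range] at hi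
  have : ((i : ℂ) + 1) = ((i + 1 : ℕ) : ℂ) := by push_cast; ring
  rw [this]
  exact qbrk_nat_ne_zero hr (Nat.succ_pos i) (by omega)

lemma qbrkFact_succ (r m : ℕ) : qbrkFact r (m+1) = qbrkFact r m * qbrk r ((m:ℂ)+1) := by
  rw [qbrkFact, Finset.prod_range_succ]; rfl

lemma qbrk_split (r : ℕ) (x y : ℂ) :
    qbrk r (x + y + 2) = qc r (-(y+1)) * qbrk r (x+1) + qc r (x+1) * qbrk r (y+1) := by
  simp only [qbrk, mul_sub, qc_mul]
  ring_nf

lemma qbrk_succ_ne_zero {r : ℕ} (hr : r ≠ 0) (a : ℕ) (h : a + 1 < r) :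
    qbrk r ((a:ℂ)+1) ≠ 0 := by
  have := qbrk_nat_ne_zero hr (a := a+1) (by omega) h
  push_cast at this
  exact this

/-- The Gaussian-type coefficient `q^{ab}{a+b}!/({a}!{b}!)`. -/
def Dc (r : ℕ) (a b : ℕ) : ℂ :=
  qc r ((a:ℂ)*b) * qbrkFact r (a+b) / (qbrkFact r a * qbrkFact r b)

lemma Dc_comm (r a b : ℕ) : Dc r a b = Dc r b a := by
  unfold Dc
  rw [mul_comm (qbrkFact r a), mul_comm (a:ℂ), Nat.add_comm a b]

lemma Dc_zero_left {r : ℕ} (hr : r ≠ 0) {m : ℕ} (h : m < r) : Dc r 0 m = 1 := by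
  have h0 : qbrkFact r 0 = 1 := by simp [qbrkFact]
  have hm := qbrkFact_ne_zero hr h
  simp only [Dc, h0, Nat.cast_zero, zero_mul, qc_zero, one_mul, zero_add]
  exact div_self hm

lemma Dc_zero_right {r : ℕ} (hr : r ≠ 0) {m : ℕ} (h : m < r) : Dc r m 0 = 1 := by
  rw [Dc_comm]; exact Dc_zero_left hr h

lemma Dc_pascal {r : ℕ} (hr : r ≠ 0) (a b : ℕ) (h : a + b + 2 < r) :
    Dc r (a+1) (b+1) = Dc r a (b+1) + qc r (2*((a:ℂ)+1)) * Dc r (a+1) b := by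
  have mult : qc r (((a:ℂ)+1)*((b:ℂ)+1)) * qbrk r ((a:ℂ)+(b:ℂ)+2)
      = qc r ((a:ℂ)*((b:ℂ)+1)) * qbrk r ((a:ℂ)+1)
        + qc r (((a:ℂ)+1)*((b:ℂ)+2)) * qbrk r ((b:ℂ)+1) := by
    rw [qbrk_split r (a:ℂ) (b:ℂ), mul_add, ← mul_assoc, ← mul_assoc, qc_mul, qc_mul]
    ring_nf
  have hFa := qbrkFact_ne_zero hr (show a < r by omega)
  have hFb := qbrkFact_ne_zero hr (show b < r by omega)
  have hFl := qbrkFact_ne_zero hr (show a+b < r by omega)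
  have hba := qbrk_succ_ne_zero hr a (by omega)
  have hbb := qbrk_succ_ne_zero hr b (by omega)
  have hbl : qbrk r ((a:ℂ)+(b:ℂ)+1) ≠ 0 := by
    have := qbrk_succ_ne_zero hr (a+b) (by omega); push_cast at this
    exact this
  unfold Dc
  have e1 : (a+1) + (b+1) = (a+b+1) + 1 := by omega
  have e2 : a + (b+1) = (a+b) + 1 := by omega
  have e3 : (a+1) + b = (a+b) + 1 := by omega
  simp only [e1, e2, e3, qbrkFact_succ]
  push_cast
  field_simp
  ring_nf
  simp only [qc_mul, qc_mul_assoc]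
  ring_nf
  ring_nf at mult
  linear_combination mult

lemma Dc_pascal' {r : ℕ} (hr : r ≠ 0) (a b : ℕ) (h : a + b + 2 < r) :
    Dc r (a+1) (b+1) = Dc r (a+1) b + qc r (2*((b:ℂ)+1)) * Dc r a (b+1) := by
  rw [Dc_comm, Dc_pascal hr b a (by omega), Dc_comm r b (a+1), Dc_comm r (b+1) a]

-- ===================== eigenvector lemmas =====================

lemma Rep.E_mem {r : ℕ} (ρ : Rep r V) {μ : ℂ} {v : V}
    (h : v ∈ Module.End.eigenspace ρ.H μ) :
    ρ.E v ∈ Module.End.eigenspace ρ.H (μ + 2) := by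
  rw [Module.End.mem_eigenspace_iff] at h ⊢
  have hrel := LinearMap.congr_fun ρ.rel_HE v
  simp only [LinearMap.sub_apply, Module.End.mul_apply, LinearMap.smul_apply] at hrel
  rw [h, map_smul] at hrel
  have : ρ.H (ρ.E v) = μ • ρ.E v + (2:ℂ) • ρ.E v := by linear_combination (norm := module) hrel
  rw [this, ← add_smul]

lemma Rep.F_mem {r : ℕ} (ρ : Rep r V) {μ : ℂ} {v : V}
    (h : v ∈ Module.End.eigenspace ρ.H μ) :
    ρ.F v ∈ Module.End.eigenspace ρ.H (μ - 2) := by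
  rw [Module.End.mem_eigenspace_iff] at h ⊢
  have hrel := LinearMap.congr_fun ρ.rel_HF v
  simp only [LinearMap.sub_apply, Module.End.mul_apply, LinearMap.smul_apply] at hrel
  rw [h, map_smul] at hrel
  have : ρ.H (ρ.F v) = μ • ρ.F v + (-2:ℂ) • ρ.F v := by linear_combination (norm := module) hrel
  rw [this, ← add_smul]
  ring_nf

lemma Rep.Epow_mem {r : ℕ} (ρ : Rep r V) {μ : ℂ} {v : V}
    (h : v ∈ Module.End.eigenspace ρ.H μ) (l : ℕ) :
    (ρ.E ^ l) v ∈ Module.End.eigenspace ρ.H (μ + 2 * l) := by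
  induction l with
  | zero => simpa using h
  | succ n ih =>
    have h2 := ρ.E_mem ih
    rw [pow_succ', Module.End.mul_apply]
    push_cast
    have hc : μ + 2 * ((n:ℂ)+1) = μ + 2*(n:ℂ) + 2 := by ring
    rw [hc]
    exact h2

lemma Rep.Fpow_mem {r : ℕ} (ρ : Rep r V) {μ : ℂ} {v : V}
    (h : v ∈ Module.End.eigenspace ρ.H μ) (l : ℕ) :
    (ρ.F ^ l) v ∈ Module.End.eigenspace ρ.H (μ - 2 * l) := by
  induction l with
  | zero => simpa using h
  | succ n ih =>
    have h2 := ρ.F_mem ih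
    rw [pow_succ', Module.End.mul_apply]
    push_cast
    have hc : μ - 2 * ((n:ℂ)+1) = μ - 2*(n:ℂ) - 2 := by ring
    rw [hc]
    exact h2

lemma Rep.K_eigen {r : ℕ} (ρ : Rep r V) (hV : IsWeight r ρ.toOps) {μ : ℂ} {v : V}
    (h : v ∈ Module.End.eigenspace ρ.H μ) : ρ.K v = qc r μ • v :=
  hV.K_apply μ v h

lemma Rep.Kinv_eigen {r : ℕ} (ρ : Rep r V) (hV : IsWeight r ρ.toOps) {μ : ℂ} {v : V}
    (h : v ∈ Module.End.eigenspace ρ.H μ) : ρ.Kinv v = qc r (-μ) • v := by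
  have hK := ρ.K_eigen hV h
  have hrel := LinearMap.congr_fun ρ.rel_KinvK v
  simp only [Module.End.mul_apply, Module.End.one_apply] at hrel
  rw [hK, map_smul] at hrel
  have hne : qc r μ ≠ 0 := qc_ne_zero r μ
  have h2 : ρ.Kinv v = (qc r μ)⁻¹ • v := by
    calc ρ.Kinv v = (qc r μ)⁻¹ • (qc r μ • ρ.Kinv v) := by
          rw [smul_smul, inv_mul_cancel₀ hne, one_smul]
      _ = (qc r μ)⁻¹ • v := by rw [hrel]
  rw [h2]
  congr 1
  have h3 : qc r (-μ) * qc r μ = 1 := by rw [qc_mul]; simp [qc_zero]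
  exact (eq_inv_of_mul_eq_one_left h3).symm

lemma tensor_H_eigen (A : Ops V) (B : Ops W) {lam mu : ℂ} {v : V} {w : W}
    (hv : v ∈ Module.End.eigenspace A.H lam) (hw : w ∈ Module.End.eigenspace B.H mu) :
    v ⊗ₜ[ℂ] w ∈ Module.End.eigenspace (tensorOps A B).H (lam + mu) := by
  rw [Module.End.mem_eigenspace_iff] at hv hw ⊢
  simp only [tensorOps, LinearMap.add_apply, TensorProduct.map_tmul, LinearMap.id_apply,
    hv, hw, TensorProduct.tmul_smul, TensorProduct.smul_tmul']
  rw [add_smul, TensorProduct.add_tmul]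



lemma tensorF_apply (A : Ops V) (B : Ops W) (x : V) (y : W) :
    (tensorOps A B).F (x ⊗ₜ[ℂ] y) = A.F x ⊗ₜ[ℂ] y + A.Kinv x ⊗ₜ[ℂ] B.F y := by
  simp [tensorOps]

lemma tensorE_apply (A : Ops V) (B : Ops W) (x : V) (y : W) :
    (tensorOps A B).E (x ⊗ₜ[ℂ] y) = x ⊗ₜ[ℂ] B.E y + A.E x ⊗ₜ[ℂ] B.K y := by
  simp [tensorOps]

/-- Expansion of `Δ(F)^l` on a tensor of weight vectors. -/
lemma Fpow_tmul {r : ℕ} (hr : r ≠ 0) (ρW : Rep r W) (ρU : Rep r U)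
    (hW : IsWeight r ρW.toOps) {mu : ℂ} {w : W} (hw : w ∈ Module.End.eigenspace ρW.H mu)
    (u : U) {l : ℕ} (hl : l < r) :
    ((tensorOps ρW.toOps ρU.toOps).F ^ l) (w ⊗ₜ[ℂ] u) =
      ∑ a ∈ Finset.range (l+1),
        (Dc r a (l-a) * qc r (-((l-a : ℕ) : ℂ) * mu)) •
          ((ρW.F ^ a) w ⊗ₜ[ℂ] (ρU.F ^ (l-a)) u) := by
  induction l with
  | zero =>
    have h0 : Dc r 0 0 = 1 := Dc_zero_left hr (by omega)
    simp [h0, qc_zero]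
  | succ n ih =>
    have hn : n < r := by omega
    rw [pow_succ', Module.End.mul_apply, ih hn, map_sum]
    have step : ∀ a ∈ Finset.range (n+1),
        (tensorOps ρW.toOps ρU.toOps).F
          ((Dc r a (n-a) * qc r (-((n-a:ℕ):ℂ) * mu)) •
            ((ρW.F ^ a) w ⊗ₜ[ℂ] (ρU.F ^ (n-a)) u))
        = (Dc r a (n-a) * qc r (-((n-a:ℕ):ℂ) * mu)) •
            ((ρW.F ^ (a+1)) w ⊗ₜ[ℂ] (ρU.F ^ (n-a)) u)
          + (Dc r a (n-a) * qc r (-((n-a:ℕ):ℂ) * mu) * qc r (-(mu - 2*(a:ℂ)))) •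
              ((ρW.F ^ a) w ⊗ₜ[ℂ] (ρU.F ^ (n-a+1)) u) := by
      intro a _
      rw [map_smul, tensorF_apply]
      rw [ρW.Kinv_eigen hW (ρW.Fpow_mem hw a)]
      rw [smul_add]
      congr 1
      · rw [pow_succ', Module.End.mul_apply]
      · rw [pow_succ' (ρU.F) (n-a), Module.End.mul_apply, ← TensorProduct.smul_tmul',
          smul_smul]
    rw [Finset.sum_congr rfl step, Finset.sum_add_distrib]
    -- Now: S1 + S2 = target
    rw [Finset.sum_range_succ' (fun a => (Dc r a (n+1-a) * qc r (-((n+1-a : ℕ) : ℂ) * mu)) •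
          ((ρW.F ^ a) w ⊗ₜ[ℂ] (ρU.F ^ (n+1-a)) u)) (n+1)]
    simp only [Nat.succ_sub_succ, Nat.sub_zero]
    -- split each g(a+1) into S1-term + extra
    have split : ∀ a ∈ Finset.range (n+1),
        (Dc r (a+1) (n-a) * qc r (-((n-a:ℕ):ℂ) * mu)) •
            ((ρW.F ^ (a+1)) w ⊗ₜ[ℂ] (ρU.F ^ (n-a)) u)
        = (Dc r a (n-a) * qc r (-((n-a:ℕ):ℂ) * mu)) •
            ((ρW.F ^ (a+1)) w ⊗ₜ[ℂ] (ρU.F ^ (n-a)) u)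
          + ((Dc r (a+1) (n-a) - Dc r a (n-a)) * qc r (-((n-a:ℕ):ℂ) * mu)) •
            ((ρW.F ^ (a+1)) w ⊗ₜ[ℂ] (ρU.F ^ (n-a)) u) := by
      intro a _
      rw [← add_smul]
      congr 1
      ring
    rw [Finset.sum_congr rfl split, Finset.sum_add_distrib]
    -- remains: S2 = Σ extra + g 0, after cancelling S1
    rw [add_assoc]
    congr 1
    -- S2 = Σ extra + g0
    rw [Finset.sum_range_succ (fun a => ((Dc r (a+1) (n-a) - Dc r a (n-a)) *
          qc r (-((n-a:ℕ):ℂ) * mu)) • ((ρW.F ^ (a+1)) w ⊗ₜ[ℂ] (ρU.F ^ (n-a)) u)) n]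
    have hext_n : ((Dc r (n+1) (n-n) - Dc r n (n-n)) * qc r (-((n-n:ℕ):ℂ) * mu)) •
          ((ρW.F ^ (n+1)) w ⊗ₜ[ℂ] (ρU.F ^ (n-n)) u) = 0 := by
      rw [Nat.sub_self]
      rw [Dc_zero_right hr (show n+1 < r by omega), Dc_zero_right hr (show n < r by omega)]
      simp
    rw [hext_n, add_zero]
    rw [Finset.sum_range_succ' (fun a => (Dc r a (n-a) * qc r (-((n-a:ℕ):ℂ) * mu) *
          qc r (-(mu - 2*(a:ℂ)))) • ((ρW.F ^ a) w ⊗ₜ[ℂ] (ρU.F ^ (n-a+1)) u)) n]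
    congr 1
    · -- main interior matching
      apply Finset.sum_congr rfl
      intro a ha
      rw [Finset.mem_range] at ha
      obtain ⟨b, hb⟩ : ∃ b, n - a = b + 1 := ⟨n - a - 1, by omega⟩
      have hb2 : n - (a+1) = b := by omega
      rw [hb, hb2]
      congr 1
      rw [Dc_pascal hr a b (by omega)]
      push_cast
      rw [add_sub_cancel_left]
      rw [mul_assoc, qc_mul, mul_comm (qc r (2 * ((a:ℂ) + 1))) (Dc r (a+1) b),
        mul_assoc, qc_mul]
      congr 1
      ring
    · -- boundary a = 0
      simp only [Nat.sub_zero]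
      congr 1
      rw [Dc_zero_left hr (show n < r by omega), Dc_zero_left hr (show n+1 < r by omega)]
      rw [one_mul, one_mul, qc_mul]
      congr 1
      push_cast
      ring


/-- Expansion of `Δ(E)^l` on a tensor of weight vectors. -/
lemma Epow_tmul {r : ℕ} (hr : r ≠ 0) (ρV : Rep r V) (ρW : Rep r W)
    (hW : IsWeight r ρW.toOps) (v : V) {mu : ℂ} {w : W}
    (hw : w ∈ Module.End.eigenspace ρW.H mu) {l : ℕ} (hl : l < r) :
    ((tensorOps ρV.toOps ρW.toOps).E ^ l) (v ⊗ₜ[ℂ] w) =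
      ∑ b ∈ Finset.range (l+1),
        (Dc r b (l-b) * qc r ((b : ℂ) * mu)) •
          ((ρV.E ^ b) v ⊗ₜ[ℂ] (ρW.E ^ (l-b)) w) := by
  induction l with
  | zero =>
    have h0 : Dc r 0 0 = 1 := Dc_zero_left hr (by omega)
    simp [h0, qc_zero]
  | succ n ih =>
    have hn : n < r := by omega
    rw [pow_succ', Module.End.mul_apply, ih hn, map_sum]
    have step : ∀ b ∈ Finset.range (n+1),
        (tensorOps ρV.toOps ρW.toOps).E
          ((Dc r b (n-b) * qc r ((b:ℂ) * mu)) •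
            ((ρV.E ^ b) v ⊗ₜ[ℂ] (ρW.E ^ (n-b)) w))
        = (Dc r b (n-b) * qc r ((b:ℂ) * mu) * qc r (mu + 2*((n-b : ℕ):ℂ))) •
            ((ρV.E ^ (b+1)) v ⊗ₜ[ℂ] (ρW.E ^ (n-b)) w)
          + (Dc r b (n-b) * qc r ((b:ℂ) * mu)) •
              ((ρV.E ^ b) v ⊗ₜ[ℂ] (ρW.E ^ (n-b+1)) w) := by
      intro b _
      rw [map_smul, tensorE_apply]
      rw [ρW.K_eigen hW (ρW.Epow_mem hw (n-b))]
      rw [smul_add, add_comm]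
      congr 1
      · rw [TensorProduct.tmul_smul, smul_smul, pow_succ' (ρV.E) b, Module.End.mul_apply]
      · rw [pow_succ' (ρW.E) (n-b), Module.End.mul_apply]
    rw [Finset.sum_congr rfl step, Finset.sum_add_distrib]
    rw [Finset.sum_range_succ' (fun b => (Dc r b (n+1-b) * qc r ((b : ℂ) * mu)) •
          ((ρV.E ^ b) v ⊗ₜ[ℂ] (ρW.E ^ (n+1-b)) w)) (n+1)]
    simp only [Nat.succ_sub_succ, Nat.sub_zero]
    push_cast
    have split : ∀ b ∈ Finset.range (n+1),
        (Dc r (b+1) (n-b) * qc r (((b:ℂ)+1) * mu)) •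
            ((ρV.E ^ (b+1)) v ⊗ₜ[ℂ] (ρW.E ^ (n-b)) w)
        = (Dc r b (n-b) * qc r ((b:ℂ) * mu) * qc r (mu + 2*((n-b : ℕ):ℂ))) •
            ((ρV.E ^ (b+1)) v ⊗ₜ[ℂ] (ρW.E ^ (n-b)) w)
          + ((Dc r (b+1) (n-b) - qc r (2*((n-b : ℕ):ℂ)) * Dc r b (n-b)) * qc r (((b:ℂ)+1) * mu)) •
            ((ρV.E ^ (b+1)) v ⊗ₜ[ℂ] (ρW.E ^ (n-b)) w) := by
      intro b _
      rw [← add_smul]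
      congr 1
      rw [mul_assoc, qc_mul]
      have : (b:ℂ) * mu + (mu + 2*((n-b : ℕ):ℂ)) = 2*((n-b : ℕ):ℂ) + ((b:ℂ)+1) * mu := by ring
      rw [this, ← qc_mul]
      ring
    rw [Finset.sum_congr rfl split, Finset.sum_add_distrib]
    rw [add_assoc]
    congr 1
    rw [Finset.sum_range_succ (fun b => ((Dc r (b+1) (n-b) - qc r (2*((n-b : ℕ):ℂ)) *
          Dc r b (n-b)) * qc r (((b:ℂ)+1) * mu)) •
          ((ρV.E ^ (b+1)) v ⊗ₜ[ℂ] (ρW.E ^ (n-b)) w)) n]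
    have hext_n : ((Dc r (n+1) (n-n) - qc r (2*((n-n : ℕ):ℂ)) * Dc r n (n-n)) *
          qc r (((n:ℂ)+1) * mu)) • ((ρV.E ^ (n+1)) v ⊗ₜ[ℂ] (ρW.E ^ (n-n)) w) = 0 := by
      rw [Nat.sub_self]
      rw [Dc_zero_right hr (show n+1 < r by omega), Dc_zero_right hr (show n < r by omega)]
      norm_num [qc_zero]
    rw [hext_n, add_zero]
    rw [Finset.sum_range_succ' (fun b => (Dc r b (n-b) * qc r ((b : ℂ) * mu)) •
          ((ρV.E ^ b) v ⊗ₜ[ℂ] (ρW.E ^ (n-b+1)) w)) n]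
    congr 1
    · apply Finset.sum_congr rfl
      intro b hb
      rw [Finset.mem_range] at hb
      obtain ⟨a, ha⟩ : ∃ a, n - b = a + 1 := ⟨n - b - 1, by omega⟩
      have ha2 : n - (b+1) = a := by omega
      rw [ha, ha2]
      congr 1
      have hpas : Dc r (b+1) (a+1) = Dc r (b+1) a + qc r (2*((a:ℂ)+1)) * Dc r b (a+1) :=
        Dc_pascal' hr b a (by omega)
      rw [hpas]
      push_cast
      rw [add_sub_cancel_right]
    · simp only [Nat.sub_zero]
      congr 1
      rw [Dc_zero_left hr (show n < r by omega), Dc_zero_left hr (show n+1 < r by omega)]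
      push_cast
      norm_num [qc_zero]


lemma sum_tri {M : Type*} [AddCommMonoid M] (n : ℕ) (f : ℕ → ℕ → M)
    (hf : ∀ a b, a < n → b < n → n ≤ a + b → f a b = 0) :
    ∑ l ∈ Finset.range n, ∑ a ∈ Finset.range (l+1), f a (l-a)
      = ∑ a ∈ Finset.range n, ∑ b ∈ Finset.range n, f a b := by
  have step1 : ∀ a ∈ Finset.range n, ∑ b ∈ Finset.range n, f a b
      = ∑ b ∈ Finset.range (n-a), f a b := by
    intro a ha
    rw [Finset.mem_range] at ha
    refine (Finset.sum_subset (Finset.range_subset_range.mpr (by omega)) ?_).symm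
    intro b hb hb'
    rw [Finset.mem_range] at hb
    rw [Finset.mem_range, not_lt] at hb'
    exact hf a b ha hb (by omega)
  rw [Finset.sum_congr rfl step1]
  rw [Finset.sum_sigma', Finset.sum_sigma']
  refine Finset.sum_bij' (fun p _ => (⟨p.2, p.1 - p.2⟩ : Σ _ : ℕ, ℕ))
    (fun p _ => (⟨p.1 + p.2, p.1⟩ : Σ _ : ℕ, ℕ)) ?_ ?_ ?_ ?_ ?_
  · intro p hp
    simp only [Finset.mem_sigma, Finset.mem_range] at hp ⊢
    omega
  · intro p hp
    simp only [Finset.mem_sigma, Finset.mem_range] at hp ⊢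
    omega
  · intro p hp
    simp only [Finset.mem_sigma, Finset.mem_range] at hp
    have : p.2 + (p.1 - p.2) = p.1 := by omega
    simp [this]
  · intro p hp
    simp only [Finset.mem_sigma, Finset.mem_range] at hp
    have : p.1 + p.2 - p.1 = p.2 := by omega
    simp [this]
  · intro p hp
    rfl

lemma span_eigen (A : Ops V) (h : (⨆ μ : ℂ, Module.End.eigenspace A.H μ) = ⊤) :
    Submodule.span ℂ {v : V | ∃ μ, v ∈ Module.End.eigenspace A.H μ} = ⊤ := by
  rw [eq_top_iff, ← h]
  refine iSup_le fun μ => ?_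
  intro v hv
  exact Submodule.subset_span ⟨μ, hv⟩

lemma ext_threefold {Y : Type*} [AddCommGroup Y] [Module ℂ Y]
    {SV : Set V} {SW : Set W} {SU : Set U}
    (hSV : Submodule.span ℂ SV = ⊤) (hSW : Submodule.span ℂ SW = ⊤)
    (hSU : Submodule.span ℂ SU = ⊤) {f g : V ⊗[ℂ] (W ⊗[ℂ] U) →ₗ[ℂ] Y}
    (h : ∀ v ∈ SV, ∀ w ∈ SW, ∀ u ∈ SU,
      f (v ⊗ₜ[ℂ] (w ⊗ₜ[ℂ] u)) = g (v ⊗ₜ[ℂ] (w ⊗ₜ[ℂ] u))) : f = g := by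
  apply TensorProduct.ext
  apply LinearMap.ext_on hSV
  intro v hv
  apply TensorProduct.ext
  apply LinearMap.ext_on hSW
  intro w hw
  apply LinearMap.ext_on hSU
  intro u hu
  simpa using h v hv w hw u hu

lemma ext_threefold' {Y : Type*} [AddCommGroup Y] [Module ℂ Y]
    {SV : Set V} {SW : Set W} {SU : Set U}
    (hSV : Submodule.span ℂ SV = ⊤) (hSW : Submodule.span ℂ SW = ⊤)
    (hSU : Submodule.span ℂ SU = ⊤) {f g : (V ⊗[ℂ] W) ⊗[ℂ] U →ₗ[ℂ] Y}
    (h : ∀ v ∈ SV, ∀ w ∈ SW, ∀ u ∈ SU,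
      f ((v ⊗ₜ[ℂ] w) ⊗ₜ[ℂ] u) = g ((v ⊗ₜ[ℂ] w) ⊗ₜ[ℂ] u)) : f = g := by
  apply TensorProduct.ext
  apply TensorProduct.ext
  apply LinearMap.ext_on hSV
  intro v hv
  apply LinearMap.ext_on hSW
  intro w hw
  apply LinearMap.ext_on hSU
  intro u hu
  simpa using h v hv w hw u hu


/-- The coefficient `{1}^{2l}/{l}! q^{l(l-1)/2}` in the braiding sum. -/
def Cc (r l : ℕ) : ℂ := qbrk r 1 ^ (2 * l) / qbrkFact r l * qc r ((l : ℂ) * ((l : ℂ) - 1) / 2)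

lemma braidSum_def (r : ℕ) (A : Ops V) (B : Ops W) :
    braidSum r A B = ∑ l ∈ Finset.range r, Cc r l • TensorProduct.map (A.E ^ l) (B.F ^ l) :=
  rfl

lemma Rep.Epow_zero {r : ℕ} (ρ : Rep r V) (v : V) {m : ℕ} (h : r ≤ m) : (ρ.E ^ m) v = 0 := by
  have : ρ.E ^ m = 0 := by
    rw [show m = (m - r) + r by omega, pow_add, ρ.rel_Er, mul_zero]
  rw [this, LinearMap.zero_apply]

lemma Rep.Fpow_zero {r : ℕ} (ρ : Rep r V) (v : V) {m : ℕ} (h : r ≤ m) : (ρ.F ^ m) v = 0 := by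
  have : ρ.F ^ m = 0 := by
    rw [show m = (m - r) + r by omega, pow_add, ρ.rel_Fr, mul_zero]
  rw [this, LinearMap.zero_apply]

/-- The braiding on a tensor of weight vectors. -/
lemma braidMap_tmul {r : ℕ} (ρV : Rep r V) (ρW : Rep r W)
    {lam mu : ℂ} {v : V} {w : W}
    (hv : v ∈ Module.End.eigenspace ρV.H lam) (hw : w ∈ Module.End.eigenspace ρW.H mu)
    (Q : Module.End ℂ (V ⊗[ℂ] W)) (hQ : IsqHH r ρV.toOps ρW.toOps Q) :
    braidMap r ρV.toOps ρW.toOps Q (v ⊗ₜ[ℂ] w)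
      = ∑ i ∈ Finset.range r,
          (Cc r i * qc r ((lam + 2 * (i:ℂ)) * (mu - 2 * (i:ℂ)) / 2)) •
            ((ρW.F ^ i) w ⊗ₜ[ℂ] (ρV.E ^ i) v) := by
  rw [braidMap]
  simp only [LinearMap.coe_comp, Function.comp_apply, LinearEquiv.coe_coe]
  rw [braidSum_def, LinearMap.sum_apply, map_sum, map_sum]
  apply Finset.sum_congr rfl
  intro i _
  rw [LinearMap.smul_apply, TensorProduct.map_tmul, map_smul,
    hQ _ _ _ _ (ρV.Epow_mem hv i) (ρW.Fpow_mem hw i), map_smul, map_smul,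
    TensorProduct.comm_tmul, smul_smul]


lemma Cc_Dc {r : ℕ} (hr : r ≠ 0) (a b : ℕ) (h : a + b < r) :
    Cc r (a+b) * Dc r a b = Cc r a * Cc r b * qc r (2*(a:ℂ)*(b:ℂ)) := by
  have ha := qbrkFact_ne_zero hr (show a < r by omega)
  have hb := qbrkFact_ne_zero hr (show b < r by omega)
  have hab := qbrkFact_ne_zero hr h
  unfold Cc Dc
  have hpow : qbrk r 1 ^ (2 * (a+b)) = qbrk r 1 ^ (2*a) * qbrk r 1 ^ (2*b) := by
    rw [← pow_add]; congr 1; omega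
  rw [hpow]
  field_simp
  ring_nf
  simp only [qc_mul, qc_mul_assoc]
  ring_nf
  push_cast
  ring_nf

lemma coeff1 {r : ℕ} (hr : r ≠ 0) (a b : ℕ) (h : a + b < r) (lam mu nu : ℂ) :
    Cc r (a+b) * (Dc r a b * qc r (-(b:ℂ) * mu)) *
      qc r ((lam + 2*((a:ℕ)+(b:ℕ) : ℂ)) * ((mu - 2*(a:ℂ)) + (nu - 2*(b:ℂ))) / 2)
    = (Cc r a * qc r ((lam + 2*(a:ℂ)) * (mu - 2*(a:ℂ)) / 2)) *
      (Cc r b * qc r (((lam + 2*(a:ℂ)) + 2*(b:ℂ)) * (nu - 2*(b:ℂ)) / 2)) := by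
  have hD := Cc_Dc hr a b h
  have hq : qc r (2*(a:ℂ)*(b:ℂ)) * (qc r (-(b:ℂ) * mu) *
        qc r ((lam + 2*((a:ℕ)+(b:ℕ) : ℂ)) * ((mu - 2*(a:ℂ)) + (nu - 2*(b:ℂ))) / 2))
      = qc r ((lam + 2*(a:ℂ)) * (mu - 2*(a:ℂ)) / 2) *
        qc r (((lam + 2*(a:ℂ)) + 2*(b:ℂ)) * (nu - 2*(b:ℂ)) / 2) := by
    rw [qc_mul, qc_mul, qc_mul]
    congr 1
    ring
  linear_combination (qc r (-(b:ℂ) * mu) *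
      qc r ((lam + 2*((a:ℕ)+(b:ℕ) : ℂ)) * ((mu - 2*(a:ℂ)) + (nu - 2*(b:ℂ))) / 2)) * hD
    + (Cc r a * Cc r b) * hq

lemma coeff2 {r : ℕ} (hr : r ≠ 0) (i j : ℕ) (h : i + j < r) (lam mu nu : ℂ) :
    Cc r (j+i) * (Dc r j i * qc r ((j:ℂ) * mu)) *
      qc r (((lam + 2*(j:ℂ)) + (mu + 2*(i:ℂ))) * (nu - 2*((j:ℕ)+(i:ℕ) : ℂ)) / 2)
    = (Cc r i * qc r ((mu + 2*(i:ℂ)) * (nu - 2*(i:ℂ)) / 2)) *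
      (Cc r j * qc r ((lam + 2*(j:ℂ)) * ((nu - 2*(i:ℂ)) - 2*(j:ℂ)) / 2)) := by
  have hD := Cc_Dc hr j i (by omega)
  have hq : qc r (2*(j:ℂ)*(i:ℂ)) * (qc r ((j:ℂ) * mu) *
        qc r (((lam + 2*(j:ℂ)) + (mu + 2*(i:ℂ))) * (nu - 2*((j:ℕ)+(i:ℕ) : ℂ)) / 2))
      = qc r ((mu + 2*(i:ℂ)) * (nu - 2*(i:ℂ)) / 2) *
        qc r ((lam + 2*(j:ℂ)) * ((nu - 2*(i:ℂ)) - 2*(j:ℂ)) / 2) := by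
    rw [qc_mul, qc_mul, qc_mul]
    congr 1
    ring
  linear_combination (qc r ((j:ℂ) * mu) *
      qc r (((lam + 2*(j:ℂ)) + (mu + 2*(i:ℂ))) * (nu - 2*((j:ℕ)+(i:ℕ) : ℂ)) / 2)) * hD
    + (Cc r i * Cc r j) * hq

/-- The hexagon identities for the braiding `c` on weight modules. -/
theorem stmt11 (r : ℕ) (hr : 2 ≤ r) (ρV : Rep r V) (ρW : Rep r W) (ρU : Rep r U)
    (hV : IsWeight r ρV.toOps) (hW : IsWeight r ρW.toOps) (hU : IsWeight r ρU.toOps)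
    (QVW : Module.End ℂ (V ⊗[ℂ] W)) (hQVW : IsqHH r ρV.toOps ρW.toOps QVW)
    (QVU : Module.End ℂ (V ⊗[ℂ] U)) (hQVU : IsqHH r ρV.toOps ρU.toOps QVU)
    (QWU : Module.End ℂ (W ⊗[ℂ] U)) (hQWU : IsqHH r ρW.toOps ρU.toOps QWU)
    (QA : Module.End ℂ (V ⊗[ℂ] (W ⊗[ℂ] U)))
    (hQA : IsqHH r ρV.toOps (tensorOps ρW.toOps ρU.toOps) QA)
    (QB : Module.End ℂ ((V ⊗[ℂ] W) ⊗[ℂ] U))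
    (hQB : IsqHH r (tensorOps ρV.toOps ρW.toOps) ρU.toOps QB) :
    braidMap r ρV.toOps (tensorOps ρW.toOps ρU.toOps) QA =
      (TensorProduct.assoc ℂ W U V).symm.toLinearMap
        ∘ₗ TensorProduct.map (LinearMap.id : W →ₗ[ℂ] W)
            (braidMap r ρV.toOps ρU.toOps QVU)
        ∘ₗ (TensorProduct.assoc ℂ W V U).toLinearMap
        ∘ₗ TensorProduct.map (braidMap r ρV.toOps ρW.toOps QVW)
            (LinearMap.id : U →ₗ[ℂ] U)
        ∘ₗ (TensorProduct.assoc ℂ V W U).symm.toLinearMap ∧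
    braidMap r (tensorOps ρV.toOps ρW.toOps) ρU.toOps QB =
      (TensorProduct.assoc ℂ U V W).toLinearMap
        ∘ₗ TensorProduct.map (braidMap r ρV.toOps ρU.toOps QVU)
            (LinearMap.id : W →ₗ[ℂ] W)
        ∘ₗ (TensorProduct.assoc ℂ V U W).symm.toLinearMap
        ∘ₗ TensorProduct.map (LinearMap.id : V →ₗ[ℂ] V)
            (braidMap r ρW.toOps ρU.toOps QWU)
        ∘ₗ (TensorProduct.assoc ℂ V W U).toLinearMap := by
  have hr' : r ≠ 0 := by omega
  constructor
  · -- first hexagon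
    apply ext_threefold (span_eigen _ hV.sup_eigenspaces) (span_eigen _ hW.sup_eigenspaces)
      (span_eigen _ hU.sup_eigenspaces)
    rintro v ⟨lam, hv⟩ w ⟨mu, hw⟩ u ⟨nu, hu⟩
    have hLHS : braidMap r ρV.toOps (tensorOps ρW.toOps ρU.toOps) QA (v ⊗ₜ[ℂ] (w ⊗ₜ[ℂ] u))
        = ∑ l ∈ Finset.range r, ∑ a ∈ Finset.range (l+1),
            (Cc r l * (Dc r a (l-a) * qc r (-((l-a : ℕ) : ℂ) * mu)) *
              qc r ((lam + 2*(l:ℂ)) * ((mu - 2*(a:ℂ)) + (nu - 2*((l-a : ℕ):ℂ))) / 2)) •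
            (((ρW.F ^ a) w ⊗ₜ[ℂ] (ρU.F ^ (l-a)) u) ⊗ₜ[ℂ] (ρV.E ^ l) v) := by
      rw [braidMap]
      simp only [LinearMap.coe_comp, Function.comp_apply, LinearEquiv.coe_coe]
      rw [braidSum_def, LinearMap.sum_apply, map_sum, map_sum]
      apply Finset.sum_congr rfl
      intro l hl
      rw [Finset.mem_range] at hl
      rw [LinearMap.smul_apply, TensorProduct.map_tmul,
        Fpow_tmul hr' ρW ρU hW hw u hl, TensorProduct.tmul_sum]
      rw [map_smul, map_smul, map_sum, map_sum, Finset.smul_sum]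
      apply Finset.sum_congr rfl
      intro a ha
      rw [TensorProduct.tmul_smul, map_smul, map_smul,
        hQA _ _ _ _ (ρV.Epow_mem hv l)
          (tensor_H_eigen ρW.toOps ρU.toOps (ρW.Fpow_mem hw a) (ρU.Fpow_mem hu (l-a))),
        map_smul, TensorProduct.comm_tmul, smul_smul, smul_smul]
    have hRHS : ((TensorProduct.assoc ℂ W U V).symm.toLinearMap
          ∘ₗ TensorProduct.map (LinearMap.id : W →ₗ[ℂ] W) (braidMap r ρV.toOps ρU.toOps QVU)
          ∘ₗ (TensorProduct.assoc ℂ W V U).toLinearMap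
          ∘ₗ TensorProduct.map (braidMap r ρV.toOps ρW.toOps QVW) (LinearMap.id : U →ₗ[ℂ] U)
          ∘ₗ (TensorProduct.assoc ℂ V W U).symm.toLinearMap) (v ⊗ₜ[ℂ] (w ⊗ₜ[ℂ] u))
        = ∑ i ∈ Finset.range r, ∑ j ∈ Finset.range r,
            ((Cc r i * qc r ((lam + 2*(i:ℂ)) * (mu - 2*(i:ℂ)) / 2)) *
              (Cc r j * qc r (((lam + 2*(i:ℂ)) + 2*(j:ℂ)) * (nu - 2*(j:ℂ)) / 2))) •
            (((ρW.F ^ i) w ⊗ₜ[ℂ] (ρU.F ^ j) u) ⊗ₜ[ℂ] (ρV.E ^ (j+i)) v) := by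
      simp only [LinearMap.coe_comp, Function.comp_apply, LinearEquiv.coe_coe,
        TensorProduct.assoc_symm_tmul, TensorProduct.map_tmul, LinearMap.id_coe, id_eq]
      rw [braidMap_tmul ρV ρW hv hw QVW hQVW, TensorProduct.sum_tmul]
      rw [map_sum, map_sum, map_sum]
      apply Finset.sum_congr rfl
      intro i hi
      rw [← TensorProduct.smul_tmul', map_smul, map_smul, map_smul,
        TensorProduct.assoc_tmul, TensorProduct.map_tmul, LinearMap.id_coe, id_eq,
        braidMap_tmul ρV ρU (ρV.Epow_mem hv i) hu QVU hQVU,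
        TensorProduct.tmul_sum, map_sum, Finset.smul_sum]
      apply Finset.sum_congr rfl
      intro j hj
      rw [TensorProduct.tmul_smul, map_smul, TensorProduct.assoc_symm_tmul, smul_smul]
      rw [← Module.End.mul_apply, ← pow_add]
    rw [hLHS, hRHS]
    have hvan : ∀ i j : ℕ, i < r → j < r → r ≤ i + j →
        ((Cc r i * qc r ((lam + 2*(i:ℂ)) * (mu - 2*(i:ℂ)) / 2)) *
          (Cc r j * qc r (((lam + 2*(i:ℂ)) + 2*(j:ℂ)) * (nu - 2*(j:ℂ)) / 2))) •
          (((ρW.F ^ i) w ⊗ₜ[ℂ] (ρU.F ^ j) u) ⊗ₜ[ℂ] (ρV.E ^ (j+i)) v) = 0 := by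
      intro i j _ _ hij
      rw [ρV.Epow_zero v (show r ≤ j + i by omega), TensorProduct.tmul_zero, smul_zero]
    rw [← sum_tri r _ hvan]
    apply Finset.sum_congr rfl
    intro l hl
    apply Finset.sum_congr rfl
    intro a ha
    rw [Finset.mem_range] at hl ha
    obtain ⟨b, rfl⟩ : ∃ b, l = a + b := ⟨l - a, by omega⟩
    simp only [Nat.add_sub_cancel_left]
    rw [show b + a = a + b by omega]
    congr 1
    push_cast
    linear_combination coeff1 hr' a b (by omega) lam mu nu
  · -- second hexagon
    apply ext_threefold' (span_eigen _ hV.sup_eigenspaces) (span_eigen _ hW.sup_eigenspaces)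
      (span_eigen _ hU.sup_eigenspaces)
    rintro v ⟨lam, hv⟩ w ⟨mu, hw⟩ u ⟨nu, hu⟩
    have hLHS : braidMap r (tensorOps ρV.toOps ρW.toOps) ρU.toOps QB ((v ⊗ₜ[ℂ] w) ⊗ₜ[ℂ] u)
        = ∑ l ∈ Finset.range r, ∑ j ∈ Finset.range (l+1),
            (Cc r l * (Dc r j (l-j) * qc r ((j:ℂ) * mu)) *
              qc r (((lam + 2*(j:ℂ)) + (mu + 2*((l-j : ℕ):ℂ))) * (nu - 2*(l:ℂ)) / 2)) •
            ((ρU.F ^ l) u ⊗ₜ[ℂ] ((ρV.E ^ j) v ⊗ₜ[ℂ] (ρW.E ^ (l-j)) w)) := by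
      rw [braidMap]
      simp only [LinearMap.coe_comp, Function.comp_apply, LinearEquiv.coe_coe]
      rw [braidSum_def, LinearMap.sum_apply, map_sum, map_sum]
      apply Finset.sum_congr rfl
      intro l hl
      rw [Finset.mem_range] at hl
      rw [LinearMap.smul_apply, TensorProduct.map_tmul,
        Epow_tmul hr' ρV ρW hW v hw hl, TensorProduct.sum_tmul]
      rw [map_smul, map_smul, map_sum, map_sum, Finset.smul_sum]
      apply Finset.sum_congr rfl
      intro j hj
      rw [← TensorProduct.smul_tmul', map_smul, map_smul,
        hQB _ _ _ _
          (tensor_H_eigen ρV.toOps ρW.toOps (ρV.Epow_mem hv j) (ρW.Epow_mem hw (l-j)))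
          (ρU.Fpow_mem hu l),
        map_smul, TensorProduct.comm_tmul, smul_smul, smul_smul]
    have hRHS : ((TensorProduct.assoc ℂ U V W).toLinearMap
          ∘ₗ TensorProduct.map (braidMap r ρV.toOps ρU.toOps QVU) (LinearMap.id : W →ₗ[ℂ] W)
          ∘ₗ (TensorProduct.assoc ℂ V U W).symm.toLinearMap
          ∘ₗ TensorProduct.map (LinearMap.id : V →ₗ[ℂ] V) (braidMap r ρW.toOps ρU.toOps QWU)
          ∘ₗ (TensorProduct.assoc ℂ V W U).toLinearMap) ((v ⊗ₜ[ℂ] w) ⊗ₜ[ℂ] u)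
        = ∑ i ∈ Finset.range r, ∑ j ∈ Finset.range r,
            ((Cc r i * qc r ((mu + 2*(i:ℂ)) * (nu - 2*(i:ℂ)) / 2)) *
              (Cc r j * qc r ((lam + 2*(j:ℂ)) * ((nu - 2*(i:ℂ)) - 2*(j:ℂ)) / 2))) •
            ((ρU.F ^ (j+i)) u ⊗ₜ[ℂ] ((ρV.E ^ j) v ⊗ₜ[ℂ] (ρW.E ^ i) w)) := by
      simp only [LinearMap.coe_comp, Function.comp_apply, LinearEquiv.coe_coe,
        TensorProduct.assoc_tmul, TensorProduct.map_tmul, LinearMap.id_coe, id_eq]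
      rw [braidMap_tmul ρW ρU hw hu QWU hQWU, TensorProduct.tmul_sum]
      rw [map_sum, map_sum, map_sum]
      apply Finset.sum_congr rfl
      intro i hi
      rw [TensorProduct.tmul_smul, map_smul, map_smul, map_smul,
        TensorProduct.assoc_symm_tmul, TensorProduct.map_tmul, LinearMap.id_coe, id_eq,
        braidMap_tmul ρV ρU hv (ρU.Fpow_mem hu i) QVU hQVU,
        TensorProduct.sum_tmul, map_sum, Finset.smul_sum]
      apply Finset.sum_congr rfl
      intro j hj
      rw [← TensorProduct.smul_tmul', map_smul, TensorProduct.assoc_tmul, smul_smul]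
      rw [← Module.End.mul_apply, ← pow_add]
    rw [hLHS, hRHS]
    have hvan : ∀ j i : ℕ, j < r → i < r → r ≤ j + i →
        ((Cc r i * qc r ((mu + 2*(i:ℂ)) * (nu - 2*(i:ℂ)) / 2)) *
          (Cc r j * qc r ((lam + 2*(j:ℂ)) * ((nu - 2*(i:ℂ)) - 2*(j:ℂ)) / 2))) •
          ((ρU.F ^ (j+i)) u ⊗ₜ[ℂ] ((ρV.E ^ j) v ⊗ₜ[ℂ] (ρW.E ^ i) w)) = 0 := by
      intro j i _ _ hij
      rw [ρU.Fpow_zero u (show r ≤ j + i by omega), TensorProduct.zero_tmul, smul_zero]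
    rw [Finset.sum_comm, ← sum_tri r _ hvan]
    apply Finset.sum_congr rfl
    intro l hl
    apply Finset.sum_congr rfl
    intro j hj
    rw [Finset.mem_range] at hl hj
    obtain ⟨i, rfl⟩ : ∃ i, l = j + i := ⟨l - j, by omega⟩
    simp only [Nat.add_sub_cancel_left]
    congr 1
    push_cast
    linear_combination coeff2 hr' i j (by omega) lam mu nu

end Unrolled
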